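/- Immediate complier potential-outcome means: under Independence, Monotonicity, Relevance, and absorbing treatment, for each wave w ∈ {1,...,w̄}, P(T_1(1) > T_1(0)) > 0 and E[Y_w(w) | T_1(1) > T_1(0)] = (E[1[T_1 = 1] · Y_w | Z = 1] − E[1[T_1 = 1] · Y_w | Z = 0]) / (E[1[T_1 = 1] | Z = 1] − E[1[T_1 = 1] | Z = 0]). -/

import Mathlib

open MeasureTheory ProbabilityTheory Finset

/-- Conditional mean `E[X | A]`: the expectation of `X` under `P` conditioned on the event `A`. -/
noncomputable def cmean {Ω : Type*} [MeasurableSpace Ω] (P : MeasureTheory.Measure Ω)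
    (A : Set Ω) (X : Ω → ℝ) : ℝ :=
  ∫ ω, X ω ∂(P[|A])

lemma cmean_eq {Ω : Type*} [MeasurableSpace Ω] (P : Measure Ω) (A : Set Ω) (X : Ω → ℝ) :
    cmean P A X = (P A).toReal⁻¹ * ∫ ω in A, X ω ∂P := by
  unfold cmean
  rw [ProbabilityTheory.cond, integral_smul_measure, ENNReal.toReal_inv, smul_eq_mul]

lemma indep_setIntegral {Ω : Type*} [MeasurableSpace Ω] (P : Measure Ω) [IsProbabilityMeasure P]
    {α : Type*} [MeasurableSpace α] {V : Ω → α} {Z : Ω → ℕ}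
    (hZ : Measurable Z) (hVZ : IndepFun V Z P) {φ : α → ℝ} (hφ : Measurable φ)
    (hint : Integrable (fun ω => φ (V ω)) P) (z : ℕ) :
    ∫ ω in {ω | Z ω = z}, φ (V ω) ∂P = (P {ω | Z ω = z}).toReal * ∫ ω, φ (V ω) ∂P := by
  set A : Set Ω := {ω | Z ω = z} with hA
  have hAmeas : MeasurableSet A := hZ (measurableSet_singleton z)
  set ψ : ℕ → ℝ := fun n => if n = z then 1 else 0 with hψ
  have hψm : Measurable ψ := measurable_from_top
  have hInd : IndepFun (fun ω => φ (V ω)) (fun ω => ψ (Z ω)) P := hVZ.comp hφ hψm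
  have h1 : (fun ω => φ (V ω) * ψ (Z ω)) = A.indicator (fun ω => φ (V ω)) := by
    ext ω
    by_cases h : Z ω = z
    · simp [hψ, h, Set.indicator_of_mem, show ω ∈ A from h]
    · simp [hψ, h, Set.indicator_of_notMem, show ω ∉ A from h]
  have h2 : (fun ω => ψ (Z ω)) = A.indicator (fun _ => (1 : ℝ)) := by
    ext ω
    by_cases h : Z ω = z
    · simp [hψ, h, show ω ∈ A from h]
    · simp [hψ, h, show ω ∉ A from h]
  have hmul := hInd.integral_fun_mul_eq_mul_integral hint.aestronglyMeasurable
    ((hψm.comp hZ).aestronglyMeasurable)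
  rw [h1] at hmul
  rw [integral_indicator hAmeas] at hmul
  rw [hmul, h2, integral_indicator hAmeas, setIntegral_const, smul_eq_mul, mul_one, mul_comm, measureReal_def]

lemma cmean_indep {Ω : Type*} [MeasurableSpace Ω] (P : Measure Ω) [IsProbabilityMeasure P]
    {α : Type*} [MeasurableSpace α] {V : Ω → α} {Z : Ω → ℕ}
    (hZ : Measurable Z) (hVZ : IndepFun V Z P) {φ : α → ℝ} (hφ : Measurable φ)
    (hint : Integrable (fun ω => φ (V ω)) P) (z : ℕ) (hz : 0 < P {ω | Z ω = z})
    {f : Ω → ℝ} (hf : ∀ ω ∈ {ω | Z ω = z}, f ω = φ (V ω)) :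
    cmean P {ω | Z ω = z} f = ∫ ω, φ (V ω) ∂P := by
  have hAmeas : MeasurableSet {ω | Z ω = z} := hZ (measurableSet_singleton z)
  rw [cmean_eq, setIntegral_congr_fun hAmeas hf, indep_setIntegral P hZ hVZ hφ hint z,
    ← mul_assoc, inv_mul_cancel₀, one_mul]
  exact ENNReal.toReal_ne_zero.2 ⟨hz.ne', measure_ne_top P _⟩

theorem immediate_complier_potential_outcome_means
    {Ω : Type*} [MeasurableSpace Ω] (P : MeasureTheory.Measure Ω) [IsProbabilityMeasure P]
    (Z : Ω → ℕ) (hZmeas : Measurable Z) (hZbin : ∀ ω, Z ω ≤ 1)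
    (hZpos : 0 < P {ω | Z ω = 1}) (hZlt : P {ω | Z ω = 1} < 1)
    (wbar : ℕ) (hwbar : 1 ≤ wbar)
    (T : ℕ → ℕ → Ω → ℕ) (hTmeas : ∀ w z, Measurable (T w z))
    (hTrange : ∀ w ∈ Set.Icc 1 wbar, ∀ z ≤ 1, ∀ ω, T w z ω ≤ w)
    (Y : ℕ → ℕ → Ω → ℝ) (hYmeas : ∀ w t, Measurable (Y w t))
    (hYint : ∀ w ∈ Set.Icc 1 wbar, ∀ t ≤ w, MeasureTheory.Integrable (Y w t) P)
    (hAbs : ∀ z ≤ 1, ∀ w, 1 ≤ w → w < wbar → ∀ ω,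
      (1 ≤ T w z ω → T (w + 1) z ω = T w z ω + 1) ∧
      (T w z ω = 0 → T (w + 1) z ω ≤ 1))
    (hIndep : ∀ w ∈ Set.Icc 1 wbar,
      IndepFun (fun ω => ((fun t : ℕ => Y w t ω), T w 1 ω, T w 0 ω)) Z P)
    (hMono : ∀ w ∈ Set.Icc 1 wbar, ∀ᵐ ω ∂P, T w 0 ω ≤ T w 1 ω)
    (hRel : cmean P {ω | Z ω = 0} (fun ω => (T 1 (Z ω) ω : ℝ))
          < cmean P {ω | Z ω = 1} (fun ω => (T 1 (Z ω) ω : ℝ))) :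
    0 < P {ω | T 1 0 ω < T 1 1 ω} ∧
    ∀ w ∈ Set.Icc 1 wbar,
      cmean P {ω | T 1 0 ω < T 1 1 ω} (fun ω => Y w w ω) =
        (cmean P {ω | Z ω = 1} (fun ω => if T 1 (Z ω) ω = 1 then Y w (T w (Z ω) ω) ω else 0)
          - cmean P {ω | Z ω = 0} (fun ω => if T 1 (Z ω) ω = 1 then Y w (T w (Z ω) ω) ω else 0)) /
        (cmean P {ω | Z ω = 1} (fun ω => if T 1 (Z ω) ω = 1 then (1 : ℝ) else 0)
          - cmean P {ω | Z ω = 0} (fun ω => if T 1 (Z ω) ω = 1 then (1 : ℝ) else 0)) := by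
  have h1w : (1 : ℕ) ∈ Set.Icc 1 wbar := ⟨le_rfl, hwbar⟩
  have hCmeas : MeasurableSet {ω | T 1 0 ω < T 1 1 ω} :=
    measurableSet_lt (hTmeas 1 0) (hTmeas 1 1)
  -- key structural lemma
  have key : ∀ z ≤ 1, ∀ w, 1 ≤ w → w ≤ wbar → ∀ ω,
      ((T 1 z ω = 1 → T w z ω = w) ∧ (T 1 z ω = 0 → T w z ω < w)) := by
    intro z hz w hw
    induction w, hw using Nat.le_induction with
    | base =>
      intro _ ω
      exact ⟨fun h => h, fun h => by omega⟩
    | succ w hw ih =>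
      intro hle ω
      have hwlt : w < wbar := by omega
      have ihω := ih (le_of_lt hwlt) ω
      have habs := hAbs z hz w hw hwlt ω
      constructor
      · intro h1
        have h2 := ihω.1 h1
        have h3 := habs.1 (by omega)
        omega
      · intro h0
        have hlt := ihω.2 h0
        rcases Nat.eq_zero_or_pos (T w z ω) with h | h
        · have := habs.2 h; omega
        · have := habs.1 h; omega
  -- measurability and positivity of {Z = 0}
  have hA1meas : MeasurableSet {ω | Z ω = 1} := hZmeas (measurableSet_singleton 1)
  have hA0 : {ω | Z ω = 0} = {ω | Z ω = 1}ᶜ := by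
    ext ω
    have := hZbin ω
    simp only [Set.mem_setOf_eq, Set.mem_compl_iff]
    omega
  have hP0 : 0 < P {ω | Z ω = 0} := by
    rw [hA0, measure_compl hA1meas (measure_ne_top P _), measure_univ]
    exact tsub_pos_iff_lt.mpr hZlt
  -- integrability of T 1 z
  have hTint : ∀ z ≤ 1, Integrable (fun ω => (T 1 z ω : ℝ)) P := by
    intro z hz
    refine (integrable_const (1 : ℝ)).mono'
      ((measurable_from_top.comp (hTmeas 1 z)).aestronglyMeasurable)
      (ae_of_all _ fun ω => ?_)
    have h := hTrange 1 h1w z hz ω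
    rw [Real.norm_eq_abs, abs_of_nonneg (by positivity)]
    exact_mod_cast h
  -- relevance rewritten
  have hrel1 : cmean P {ω | Z ω = 1} (fun ω => (T 1 (Z ω) ω : ℝ))
      = ∫ ω, (T 1 1 ω : ℝ) ∂P := by
    exact cmean_indep P hZmeas (hIndep 1 h1w)
      (φ := fun p : (ℕ → ℝ) × ℕ × ℕ => (p.2.1 : ℝ))
      (measurable_from_top.comp (measurable_fst.comp measurable_snd))
      (hTint 1 le_rfl) 1 hZpos
      (fun ω hω => by simp only [Set.mem_setOf_eq] at hω; rw [hω])
  have hrel0 : cmean P {ω | Z ω = 0} (fun ω => (T 1 (Z ω) ω : ℝ))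
      = ∫ ω, (T 1 0 ω : ℝ) ∂P := by
    exact cmean_indep P hZmeas (hIndep 1 h1w)
      (φ := fun p : (ℕ → ℝ) × ℕ × ℕ => (p.2.2 : ℝ))
      (measurable_from_top.comp (measurable_snd.comp measurable_snd))
      (hTint 0 (by norm_num)) 0 hP0
      (fun ω hω => by simp only [Set.mem_setOf_eq] at hω; rw [hω])
  -- positivity of the complier event
  have hC0 : 0 < P {ω | T 1 0 ω < T 1 1 ω} := by
    by_contra h
    push_neg at h
    have hC : P {ω | T 1 0 ω < T 1 1 ω} = 0 := le_antisymm h zero_le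
    have hae : ∀ᵐ ω ∂P, T 1 1 ω ≤ T 1 0 ω := by
      rw [ae_iff]
      simpa [not_le] using hC
    have heq : (fun ω => (T 1 0 ω : ℝ)) =ᵐ[P] fun ω => (T 1 1 ω : ℝ) := by
      filter_upwards [hae, hMono 1 h1w] with ω h1 h2
      have : T 1 0 ω = T 1 1 ω := le_antisymm h2 h1
      simp [this]
    rw [hrel0, hrel1] at hRel
    exact hRel.ne (integral_congr_ae heq)
  refine ⟨hC0, ?_⟩
  intro w hw
  have hw1 : 1 ≤ w := hw.1
  have hwb : w ≤ wbar := hw.2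
  have hr1 : ∀ ω, T 1 1 ω ≤ 1 := hTrange 1 h1w 1 le_rfl
  have hr0 : ∀ ω, T 1 0 ω ≤ 1 := hTrange 1 h1w 0 (by norm_num)
  -- integrability of the composed integrands
  have hYww := hYint w hw w le_rfl
  have hint1 : Integrable (fun ω => if T w 1 ω = w then Y w w ω else 0) P := by
    refine hYww.abs.mono'
      ((Measurable.ite ((hTmeas w 1) (measurableSet_singleton w)) (hYmeas w w)
        measurable_const).aestronglyMeasurable) (ae_of_all _ fun ω => ?_)
    rw [Real.norm_eq_abs]
    split_ifs
    · exact le_rfl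
    · simp [abs_nonneg]
  have hint0 : Integrable (fun ω => if T w 0 ω = w then Y w w ω else 0) P := by
    refine hYww.abs.mono'
      ((Measurable.ite ((hTmeas w 0) (measurableSet_singleton w)) (hYmeas w w)
        measurable_const).aestronglyMeasurable) (ae_of_all _ fun ω => ?_)
    rw [Real.norm_eq_abs]
    split_ifs
    · exact le_rfl
    · simp [abs_nonneg]
  have hind1 : Integrable (fun ω => if T 1 1 ω = 1 then (1 : ℝ) else 0) P := by
    refine (integrable_const (1 : ℝ)).mono'
      ((Measurable.ite ((hTmeas 1 1) (measurableSet_singleton 1)) measurable_const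
        measurable_const).aestronglyMeasurable) (ae_of_all _ fun ω => ?_)
    split_ifs <;> simp
  have hind0 : Integrable (fun ω => if T 1 0 ω = 1 then (1 : ℝ) else 0) P := by
    refine (integrable_const (1 : ℝ)).mono'
      ((Measurable.ite ((hTmeas 1 0) (measurableSet_singleton 1)) measurable_const
        measurable_const).aestronglyMeasurable) (ae_of_all _ fun ω => ?_)
    split_ifs <;> simp
  -- the four cmean identifications
  have hnum1 : cmean P {ω | Z ω = 1}
      (fun ω => if T 1 (Z ω) ω = 1 then Y w (T w (Z ω) ω) ω else 0)
      = ∫ ω, (if T w 1 ω = w then Y w w ω else 0) ∂P := by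
    refine cmean_indep P hZmeas (hIndep w hw)
      (φ := fun p : (ℕ → ℝ) × ℕ × ℕ => if p.2.1 = w then p.1 w else 0)
      (Measurable.ite ((measurable_fst.comp measurable_snd) (measurableSet_singleton w))
        ((measurable_pi_apply w).comp measurable_fst) measurable_const)
      hint1 1 hZpos (fun ω hω => ?_)
    have hz : Z ω = 1 := hω
    simp only [hz]
    by_cases h : T 1 1 ω = 1
    · have hTw : T w 1 ω = w := (key 1 le_rfl w hw1 hwb ω).1 h
      simp [h, hTw]
    · have h0 : T 1 1 ω = 0 := by have := hr1 ω; omega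
      have hne : T w 1 ω ≠ w := by
        have := (key 1 le_rfl w hw1 hwb ω).2 h0; omega
      simp [h, hne]
  have hnum0 : cmean P {ω | Z ω = 0}
      (fun ω => if T 1 (Z ω) ω = 1 then Y w (T w (Z ω) ω) ω else 0)
      = ∫ ω, (if T w 0 ω = w then Y w w ω else 0) ∂P := by
    refine cmean_indep P hZmeas (hIndep w hw)
      (φ := fun p : (ℕ → ℝ) × ℕ × ℕ => if p.2.2 = w then p.1 w else 0)
      (Measurable.ite ((measurable_snd.comp measurable_snd) (measurableSet_singleton w))
        ((measurable_pi_apply w).comp measurable_fst) measurable_const)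
      hint0 0 hP0 (fun ω hω => ?_)
    have hz : Z ω = 0 := hω
    simp only [hz]
    by_cases h : T 1 0 ω = 1
    · have hTw : T w 0 ω = w := (key 0 (by norm_num) w hw1 hwb ω).1 h
      simp [h, hTw]
    · have h0 : T 1 0 ω = 0 := by have := hr0 ω; omega
      have hne : T w 0 ω ≠ w := by
        have := (key 0 (by norm_num) w hw1 hwb ω).2 h0; omega
      simp [h, hne]
  have hden1 : cmean P {ω | Z ω = 1}
      (fun ω => if T 1 (Z ω) ω = 1 then (1 : ℝ) else 0)
      = ∫ ω, (if T 1 1 ω = 1 then (1 : ℝ) else 0) ∂P := by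
    refine cmean_indep P hZmeas (hIndep 1 h1w)
      (φ := fun p : (ℕ → ℝ) × ℕ × ℕ => if p.2.1 = 1 then (1 : ℝ) else 0)
      (Measurable.ite ((measurable_fst.comp measurable_snd) (measurableSet_singleton 1))
        measurable_const measurable_const)
      hind1 1 hZpos (fun ω hω => ?_)
    have hz : Z ω = 1 := hω
    simp only [hz]
  have hden0 : cmean P {ω | Z ω = 0}
      (fun ω => if T 1 (Z ω) ω = 1 then (1 : ℝ) else 0)
      = ∫ ω, (if T 1 0 ω = 1 then (1 : ℝ) else 0) ∂P := by
    refine cmean_indep P hZmeas (hIndep 1 h1w)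
      (φ := fun p : (ℕ → ℝ) × ℕ × ℕ => if p.2.2 = 1 then (1 : ℝ) else 0)
      (Measurable.ite ((measurable_snd.comp measurable_snd) (measurableSet_singleton 1))
        measurable_const measurable_const)
      hind0 0 hP0 (fun ω hω => ?_)
    have hz : Z ω = 0 := hω
    simp only [hz]
  -- numerator
  have hnum : (∫ ω, (if T w 1 ω = w then Y w w ω else 0) ∂P)
      - ∫ ω, (if T w 0 ω = w then Y w w ω else 0) ∂P
      = ∫ ω in {ω | T 1 0 ω < T 1 1 ω}, Y w w ω ∂P := by
    rw [← integral_sub hint1 hint0, ← integral_indicator hCmeas]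
    refine integral_congr_ae ?_
    filter_upwards [hMono 1 h1w] with ω hm
    have hrr1 := hr1 ω
    have hrr0 := hr0 ω
    by_cases hc : T 1 0 ω < T 1 1 ω
    · have h11 : T 1 1 ω = 1 := by omega
      have h00 : T 1 0 ω = 0 := by omega
      have e1 : T w 1 ω = w := (key 1 le_rfl w hw1 hwb ω).1 h11
      have e0 : T w 0 ω ≠ w := by
        have := (key 0 (by norm_num) w hw1 hwb ω).2 h00; omega
      simp [e1, e0, Set.indicator_of_mem (show ω ∈ {ω | T 1 0 ω < T 1 1 ω} from hc)]
    · have heq : T 1 0 ω = T 1 1 ω := le_antisymm hm (not_lt.1 hc)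
      by_cases h1 : T 1 1 ω = 1
      · have e1 : T w 1 ω = w := (key 1 le_rfl w hw1 hwb ω).1 h1
        have e0 : T w 0 ω = w := (key 0 (by norm_num) w hw1 hwb ω).1 (heq.trans h1)
        simp [e1, e0, Set.indicator_of_notMem (show ω ∉ {ω | T 1 0 ω < T 1 1 ω} from hc)]
      · have h10 : T 1 1 ω = 0 := by omega
        have e1 : T w 1 ω ≠ w := by
          have := (key 1 le_rfl w hw1 hwb ω).2 h10; omega
        have e0 : T w 0 ω ≠ w := by
          have := (key 0 (by norm_num) w hw1 hwb ω).2 (by omega); omega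
        simp [e1, e0, Set.indicator_of_notMem (show ω ∉ {ω | T 1 0 ω < T 1 1 ω} from hc)]
  -- denominator
  have hden : (∫ ω, (if T 1 1 ω = 1 then (1 : ℝ) else 0) ∂P)
      - ∫ ω, (if T 1 0 ω = 1 then (1 : ℝ) else 0) ∂P
      = (P {ω | T 1 0 ω < T 1 1 ω}).toReal := by
    rw [← integral_sub hind1 hind0]
    have : ∫ ω, ((if T 1 1 ω = 1 then (1 : ℝ) else 0) - if T 1 0 ω = 1 then (1 : ℝ) else 0) ∂P
        = ∫ ω, ({ω | T 1 0 ω < T 1 1 ω}.indicator (fun _ => (1 : ℝ))) ω ∂P := by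
      refine integral_congr_ae ?_
      filter_upwards [hMono 1 h1w] with ω hm
      have hrr1 := hr1 ω
      have hrr0 := hr0 ω
      by_cases hc : T 1 0 ω < T 1 1 ω
      · have h11 : T 1 1 ω = 1 := by omega
        have h00 : T 1 0 ω ≠ 1 := by omega
        simp [h11, h00, Set.indicator_of_mem (show ω ∈ {ω | T 1 0 ω < T 1 1 ω} from hc)]
      · have heq : T 1 0 ω = T 1 1 ω := le_antisymm hm (not_lt.1 hc)
        by_cases h1 : T 1 1 ω = 1
        · simp [h1, heq.trans h1,
            Set.indicator_of_notMem (show ω ∉ {ω | T 1 0 ω < T 1 1 ω} from hc)]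
        · have h10 : T 1 1 ω ≠ 1 := h1
          have h00 : T 1 0 ω ≠ 1 := by omega
          simp [h10, h00,
            Set.indicator_of_notMem (show ω ∉ {ω | T 1 0 ω < T 1 1 ω} from hc)]
    rw [this, integral_indicator hCmeas, setIntegral_const, smul_eq_mul, mul_one, measureReal_def]
  rw [hnum1, hnum0, hden1, hden0, hnum, hden, cmean_eq, div_eq_mul_inv, mul_comm]
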